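/- arXiv:2101.05878 — 3 statements merged into one kernel-verified Lean document; each statement's English description precedes it below -/
import Mathlib

section
/- Every infinite branch avoiding Solovay's bar encodes the jump: with α, T as below, define ρ : List ℕ → ℕ by ρ s = 0 iff there exists j < s.length such that either j = 2*k and s.get j ≠ α k, or j = 2*k+1 and s.get j = 0 and ∃ y ≤ s.length, T k y, or j = 2*k+1 and s.get j = m+1 and m is not the least y with T k y; otherwise ρ s = 1. Then for any γ : ℕ → ℕ with ρ ([γ 0, ..., γ (n-1)]) ≠ 0 for all n, we have: γ (2*n) = α n, and γ (2*n+1) > 0 ↔ ∃ y, T n y, and if γ (2*n+1) = m+1 then m is the least y with T n y. -/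
/-- The initial segment `[γ 0, ..., γ (n-1)]` of `γ` of length `n`. -/
def seg (γ : ℕ → ℕ) (n : ℕ) : List ℕ := (List.range n).map γ

/-- `m` is the least `y` with `T k y`. -/
def IsLeastWitness (T : ℕ → ℕ → Prop) (k m : ℕ) : Prop :=
  T k m ∧ ∀ y, T k y → m ≤ y

/-- Solovay's bar: `rho α T s = 0` iff some entry of `s` violates the
jump-encoding conditions; otherwise `rho α T s = 1`. -/
noncomputable def rho (α : ℕ → ℕ) (T : ℕ → ℕ → Prop) (s : List ℕ) : ℕ := by
  classical
  exact if (∃ j : Fin s.length,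
      (∃ k, (j : ℕ) = 2*k ∧ s.get j ≠ α k) ∨
      (∃ k, (j : ℕ) = 2*k+1 ∧ s.get j = 0 ∧ ∃ y ≤ s.length, T k y) ∨
      (∃ k m, (j : ℕ) = 2*k+1 ∧ s.get j = m+1 ∧ ¬ IsLeastWitness T k m))
    then 0 else 1

/-- `s` is a correct initial segment of the jump-encoding `β`. -/
def Good (α : ℕ → ℕ) (T : ℕ → ℕ → Prop) (s : List ℕ) : Prop :=
  ∀ j : Fin s.length,
    (∀ k, (j : ℕ) = 2*k → s.get j = α k) ∧
    (∀ k, (j : ℕ) = 2*k+1 →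
      (s.get j > 0 ↔ ∃ y, T k y) ∧
      ∀ m, s.get j = m+1 → IsLeastWitness T k m)

/-- Every infinite branch avoiding Solovay's bar encodes the jump. -/
theorem branch_encodes_jump (α : ℕ → ℕ) (T : ℕ → ℕ → Prop)
    (hT : ∀ n, DecidablePred (T n)) (γ : ℕ → ℕ)
    (hγ : ∀ n, rho α T (seg γ n) ≠ 0) :
    (∀ n, γ (2*n) = α n) ∧
    (∀ n, γ (2*n+1) > 0 ↔ ∃ y, T n y) ∧
    (∀ n m, γ (2*n+1) = m+1 → IsLeastWitness T n m) := by
  classical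
  have hlen : ∀ n, (seg γ n).length = n := by intro n; simp [seg]
  have hget : ∀ n (j : Fin (seg γ n).length), (seg γ n).get j = γ j := by
    intro n j
    rw [List.get_eq_getElem]; simp [seg]
  have H : ∀ n, ¬ (∃ j : Fin (seg γ n).length,
      (∃ k, (j : ℕ) = 2*k ∧ (seg γ n).get j ≠ α k) ∨
      (∃ k, (j : ℕ) = 2*k+1 ∧ (seg γ n).get j = 0 ∧ ∃ y ≤ (seg γ n).length, T k y) ∨
      (∃ k m, (j : ℕ) = 2*k+1 ∧ (seg γ n).get j = m+1 ∧ ¬ IsLeastWitness T k m)) := by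
    intro n h
    have h0 := hγ n
    unfold rho at h0
    rw [if_pos h] at h0
    exact h0 rfl
  have hleast : ∀ n m, γ (2*n+1) = m+1 → IsLeastWitness T n m := by
    intro n m hm
    by_contra hc
    apply H (2*n+2)
    refine ⟨⟨2*n+1, by rw [hlen]; omega⟩, Or.inr (Or.inr ⟨n, m, rfl, ?_, hc⟩)⟩
    rw [hget]; exact hm
  refine ⟨?_, ?_, hleast⟩
  · intro n
    by_contra hc
    apply H (2*n+1)
    refine ⟨⟨2*n, by rw [hlen]; omega⟩, Or.inl ⟨n, rfl, ?_⟩⟩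
    rw [hget]; exact hc
  · intro n
    constructor
    · intro hpos
      obtain ⟨m, hm⟩ : ∃ m, γ (2*n+1) = m+1 := ⟨γ (2*n+1) - 1, by omega⟩
      exact ⟨m, (hleast n m hm).1⟩
    · rintro ⟨y, hy⟩
      by_contra hc
      apply H (2*n+2+y)
      refine ⟨⟨2*n+1, by rw [hlen]; omega⟩, Or.inr (Or.inl ⟨n, rfl, ?_, y, by rw [hlen]; omega, hy⟩)⟩
      rw [hget]; show γ (2*n+1) = 0; omega
end

section
/- Closure under Turing jump from decidable bar induction, abstract form: assume the contrapositive bar induction principle BI⁻ (for every ρ : List ℕ → ℕ and predicate A : List ℕ → Prop satisfying the two closure clauses with ¬A [], there is an infinite branch avoiding the ρ-bar). Then for every α : ℕ → ℕ and every T : ℕ → ℕ → Prop with each T n decidable, there exists β : ℕ → ℕ with β (2*n) = α n and (β (2*n+1) > 0 ↔ ∃ y, T n y) for all n. -/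
lemma seg_length (γ : ℕ → ℕ) (n : ℕ) : (seg γ n).length = n := by
  simp [seg]

lemma seg_getD (γ : ℕ → ℕ) {n i : ℕ} (h : i < n) : (seg γ n).getD i 0 = γ i := by
  rw [List.getD_eq_getElem _ _ (by simpa [seg] using h)]
  simp [seg]

lemma getD_append_lt (s : List ℕ) (m i : ℕ) (h : i < s.length) :
    (s ++ [m]).getD i 0 = s.getD i 0 :=
  List.getD_append _ _ _ _ h

lemma getD_append_self (s : List ℕ) (m : ℕ) :
    (s ++ [m]).getD s.length 0 = m := by
  rw [List.getD_eq_getElem _ _ (by simp)]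
  simp

/-- Closure under Turing jump from the contrapositive bar induction principle. -/
theorem jump_of_bar_induction
    (BI : ∀ (ρ : List ℕ → ℕ) (A : List ℕ → Prop),
      (∀ s, ρ s = 0 → A s) → (∀ s, (∀ n : ℕ, A (s ++ [n])) → A s) → ¬ A [] →
      ∃ γ : ℕ → ℕ, ∀ n, ρ (seg γ n) ≠ 0)
    (α : ℕ → ℕ) (T : ℕ → ℕ → Prop) (hT : ∀ n, DecidablePred (T n)) :
    ∃ β : ℕ → ℕ, (∀ n, β (2*n) = α n) ∧ ∀ n, (β (2*n+1) > 0 ↔ ∃ y, T n y) := by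
  classical
  -- `Bad s`: a decidable (bounded) violation inside `s`.
  set Bad : List ℕ → Prop := fun s =>
    (∃ n, 2*n < s.length ∧ s.getD (2*n) 0 ≠ α n) ∨
    (∃ n, 2*n+1 < s.length ∧
      ((∃ y, s.getD (2*n+1) 0 = y+1 ∧ ¬ T n y) ∨
       (s.getD (2*n+1) 0 = 0 ∧ ∃ y ≤ s.length, T n y))) with hBadDef
  set ρ : List ℕ → ℕ := fun s => if Bad s then 0 else 1 with hρDef
  -- `Ext s`: `s` is strongly correct (unbounded conditions).
  set Ext : List ℕ → Prop := fun s =>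
    (∀ n, 2*n < s.length → s.getD (2*n) 0 = α n) ∧
    (∀ n, 2*n+1 < s.length →
      ((s.getD (2*n+1) 0 = 0 → ¬ ∃ y, T n y) ∧
       ∀ y, s.getD (2*n+1) 0 = y+1 → T n y)) with hExtDef
  have hρ0 : ∀ s, ρ s = 0 ↔ Bad s := by
    intro s; by_cases h : Bad s <;> simp [hρDef, h]
  -- First BI hypothesis
  have h1 : ∀ s, ρ s = 0 → ¬ Ext s := by
    intro s hs hE
    rw [hρ0] at hs
    rcases hs with ⟨n, hn, hne⟩ | ⟨n, hn, ⟨y, hy, hnT⟩ | ⟨h0, y, hy, hTy⟩⟩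
    · exact hne (hE.1 n hn)
    · exact hnT ((hE.2 n hn).2 y hy)
    · exact (hE.2 n hn).1 h0 ⟨y, hTy⟩
  -- Second BI hypothesis
  have h2 : ∀ s, (∀ m : ℕ, ¬ Ext (s ++ [m])) → ¬ Ext s := by
    intro s hall hE
    -- choose a good extension value m
    rcases Nat.even_or_odd s.length with ⟨n, hlen⟩ | ⟨n, hlen⟩
    · -- even length 2n : put α n
      apply hall (α n)
      constructor
      · intro k hk
        simp only [List.length_append, List.length_singleton] at hk
        by_cases hlt : 2*k < s.length
        · rw [getD_append_lt _ _ _ hlt]; exact hE.1 k hlt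
        · have hk' : 2*k = s.length := by omega
          have hkn : k = n := by omega
          rw [hk', getD_append_self, hkn]
      · intro k hk
        simp only [List.length_append, List.length_singleton] at hk
        have hlt : 2*k+1 < s.length := by omega
        rw [getD_append_lt _ _ _ hlt]
        exact hE.2 k hlt
    · -- odd length 2n+1 : search for witness for T n
      by_cases hw : ∃ y, T n y
      · have := hT n
        apply hall (Nat.find hw + 1)
        constructor
        · intro k hk
          simp only [List.length_append, List.length_singleton] at hk
          have hlt : 2*k < s.length := by omega
          rw [getD_append_lt _ _ _ hlt]; exact hE.1 k hlt
        · intro k hk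
          simp only [List.length_append, List.length_singleton] at hk
          by_cases hlt : 2*k+1 < s.length
          · rw [getD_append_lt _ _ _ hlt]; exact hE.2 k hlt
          · have hk' : 2*k+1 = s.length := by omega
            have hkn : k = n := by omega
            rw [hk', getD_append_self, hkn]
            refine ⟨fun h0 => by omega, fun y hy => ?_⟩
            have : y = Nat.find hw := by omega
            rw [this]; exact Nat.find_spec hw
      · apply hall 0
        constructor
        · intro k hk
          simp only [List.length_append, List.length_singleton] at hk
          have hlt : 2*k < s.length := by omega
          rw [getD_append_lt _ _ _ hlt]; exact hE.1 k hlt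
        · intro k hk
          simp only [List.length_append, List.length_singleton] at hk
          by_cases hlt : 2*k+1 < s.length
          · rw [getD_append_lt _ _ _ hlt]; exact hE.2 k hlt
          · have hk' : 2*k+1 = s.length := by omega
            have hkn : k = n := by omega
            rw [hk', getD_append_self, hkn]
            exact ⟨fun _ => hw, fun y hy => by omega⟩
  -- Third BI hypothesis
  have h3 : ¬ ¬ Ext ([] : List ℕ) := by
    intro h
    exact h ⟨fun n hn => by simp at hn, fun n hn => by simp at hn⟩
  obtain ⟨γ, hγ⟩ := BI ρ (fun s => ¬ Ext s) h1 h2 h3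
  have hγ' : ∀ n, ¬ Bad (seg γ n) := fun n hB => hγ n ((hρ0 _).mpr hB)
  refine ⟨γ, ?_, ?_⟩
  · intro n
    by_contra hne
    apply hγ' (2*n+1)
    exact Or.inl ⟨n, by rw [seg_length]; omega,
      by rw [seg_getD γ (by omega)]; exact hne⟩
  · intro n
    constructor
    · intro hpos
      refine ⟨γ (2*n+1) - 1, ?_⟩
      by_contra hnT
      apply hγ' (2*n+2)
      refine Or.inr ⟨n, by rw [seg_length]; omega, Or.inl ⟨γ (2*n+1) - 1, ?_, hnT⟩⟩
      rw [seg_getD γ (by omega)]; omega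
    · rintro ⟨y, hy⟩
      by_contra h0
      have h0' : γ (2*n+1) = 0 := by omega
      apply hγ' (2*n+2+y)
      refine Or.inr ⟨n, by rw [seg_length]; omega, Or.inr ⟨?_, y, ?_, hy⟩⟩
      · rw [seg_getD γ (by omega)]; exact h0'
      · rw [seg_length]; omega
end

section
/- The branch through Solovay's tree is unique: with ρ defined from α : ℕ → ℕ and T : ℕ → ℕ → Prop (each T n decidable) as in Solovay's Lemma, any two functions γ, γ' : ℕ → ℕ satisfying ρ (initial segment of length n) ≠ 0 for all n are equal. -/
/-- The branch through Solovay's tree is unique. -/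
theorem branch_unique (α : ℕ → ℕ) (T : ℕ → ℕ → Prop)
    (hT : ∀ n, DecidablePred (T n)) (γ γ' : ℕ → ℕ)
    (hγ : ∀ n, rho α T (seg γ n) ≠ 0)
    (hγ' : ∀ n, rho α T (seg γ' n) ≠ 0) :
    γ = γ' := by
  classical
  have fact : ∀ (δ : ℕ → ℕ), (∀ n, rho α T (seg δ n) ≠ 0) → ∀ j n, j < n →
      (∀ k, j = 2*k → δ j = α k) ∧
      (∀ k, j = 2*k+1 → (δ j = 0 → ¬ ∃ y ≤ n, T k y) ∧
        ∀ m, δ j = m+1 → IsLeastWitness T k m) := by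
    intro δ hδ j n hjn
    have hlen : (seg δ n).length = n := by simp [seg]
    have hjl : j < (seg δ n).length := by omega
    have hP : ¬ (∃ jj : Fin (seg δ n).length,
        (∃ k, (jj : ℕ) = 2*k ∧ (seg δ n).get jj ≠ α k) ∨
        (∃ k, (jj : ℕ) = 2*k+1 ∧ (seg δ n).get jj = 0 ∧ ∃ y ≤ (seg δ n).length, T k y) ∨
        (∃ k m, (jj : ℕ) = 2*k+1 ∧ (seg δ n).get jj = m+1 ∧ ¬ IsLeastWitness T k m)) := by
      intro h
      exact hδ n (by simp only [rho]; rw [if_pos h])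
    have hg : (seg δ n).get ⟨j, hjl⟩ = δ j := by simp [seg]
    refine ⟨?_, ?_⟩
    · intro k hk
      by_contra hne
      exact hP ⟨⟨j, hjl⟩, Or.inl ⟨k, hk, by rw [hg]; exact hne⟩⟩
    · intro k hk
      constructor
      · intro h0 ⟨y, hy, hTy⟩
        exact hP ⟨⟨j, hjl⟩, Or.inr (Or.inl ⟨k, hk, by rw [hg]; exact h0,
          ⟨y, by omega, hTy⟩⟩)⟩
      · intro m hm
        by_contra hne
        exact hP ⟨⟨j, hjl⟩, Or.inr (Or.inr ⟨k, m, hk, by rw [hg]; exact hm, hne⟩)⟩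
  funext j
  rcases Nat.even_or_odd j with ⟨k, hk⟩ | ⟨k, hk⟩
  · have h1 := (fact γ hγ j (j+1) (Nat.lt_succ_self j)).1 k (by omega)
    have h2 := (fact γ' hγ' j (j+1) (Nat.lt_succ_self j)).1 k (by omega)
    rw [h1, h2]
  · have hk' : j = 2*k+1 := by omega
    rcases hg1 : γ j with _ | m <;> rcases hg2 : γ' j with _ | m'
    · rfl
    · have hlw := (fact γ' hγ' j (j+1) (Nat.lt_succ_self j)).2 k hk' |>.2 m' hg2
      have := (fact γ hγ j (max (j+1) (m'+1)) (by omega)).2 k hk' |>.1 hg1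
      exact absurd ⟨m', by omega, hlw.1⟩ this
    · have hlw := (fact γ hγ j (j+1) (Nat.lt_succ_self j)).2 k hk' |>.2 m hg1
      have := (fact γ' hγ' j (max (j+1) (m+1)) (by omega)).2 k hk' |>.1 hg2
      exact absurd ⟨m, by omega, hlw.1⟩ this
    · have hlw1 := (fact γ hγ j (j+1) (Nat.lt_succ_self j)).2 k hk' |>.2 m hg1
      have hlw2 := (fact γ' hγ' j (j+1) (Nat.lt_succ_self j)).2 k hk' |>.2 m' hg2
      have : m = m' := le_antisymm (hlw1.2 m' hlw2.1) (hlw2.2 m hlw1.1)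
      rw [this]
end
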